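/- For every integer k ≥ 0, the Laplace polynomial Q_k has the unique expansion Q_k(t) = Σ_{j ∈ J(k)} β_{k,j} · P_j(t) in the basis of Laplace polynomials P_j, where J(k) = { j : 0 ≤ j ≤ k and j ≡ k (mod 2) } and β_{k,j} = ((k+j)/2)! / j!. -/

import Mathlib

open Polynomial

/-- The Laplace polynomials `P_k`. -/
noncomputable def laplaceP : ℕ → Polynomial ℝ
  | 0 => 1
  | k + 1 => X * laplaceP k + derivative (laplaceP k)

/-- The Laplace polynomials `Q_k`. -/
noncomputable def laplaceQ : ℕ → Polynomial ℝ
  | 0 => 1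
  | k + 1 => laplaceP (k + 1) + derivative (laplaceQ k)

/-- The index set `J(k) = {j : 0 ≤ j ≤ k, j ≡ k (mod 2)}`. -/
def laplaceJ (k : ℕ) : Finset ℕ := (Finset.range (k + 1)).filter (fun j => j % 2 = k % 2)

lemma laplaceP_monic_deg (k : ℕ) : (laplaceP k).Monic ∧ (laplaceP k).degree = k := by
  induction k with
  | zero => exact ⟨monic_one, degree_one⟩
  | succ k ih =>
    obtain ⟨hm, hd⟩ := ih
    have hXP : (X * laplaceP k).Monic := monic_X.mul hm
    have hdXP : (X * laplaceP k).degree = ((k + 1 : ℕ) : WithBot ℕ) := by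
      rw [degree_mul, degree_X, hd]
      norm_cast
      omega
    have hder : (derivative (laplaceP k)).degree < (X * laplaceP k).degree := by
      have h1 := degree_derivative_lt hm.ne_zero
      rw [hd] at h1
      rw [hdXP]
      exact h1.trans (by exact_mod_cast Nat.lt_succ_self k)
    constructor
    · show (X * laplaceP k + derivative (laplaceP k)).Monic
      exact hXP.add_of_left hder
    · show (X * laplaceP k + derivative (laplaceP k)).degree = ((k+1 : ℕ) : WithBot ℕ)
      rw [degree_add_eq_left_of_degree_lt hder, hdXP]

lemma laplaceP_natDegree (k : ℕ) : (laplaceP k).natDegree = k :=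
  natDegree_eq_of_degree_eq_some (laplaceP_monic_deg k).2

lemma laplaceP_coeff_self (k : ℕ) : (laplaceP k).coeff k = 1 := by
  have := (laplaceP_monic_deg k).1.coeff_natDegree
  rwa [laplaceP_natDegree] at this

lemma laplaceP_coeff_of_lt {j a : ℕ} (h : j < a) : (laplaceP j).coeff a = 0 :=
  coeff_eq_zero_of_natDegree_lt (by rw [laplaceP_natDegree]; exact h)

lemma deriv_laplaceP_succ (k : ℕ) :
    derivative (laplaceP (k + 1)) = C ((k : ℝ) + 1) * laplaceP k := by
  induction k with
  | zero => simp [laplaceP]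
  | succ k ih =>
    have h2 : laplaceP (k + 2) = X * laplaceP (k + 1) + derivative (laplaceP (k + 1)) := rfl
    have h1 : laplaceP (k + 1) = X * laplaceP k + derivative (laplaceP k) := rfl
    rw [h2, derivative_add, derivative_mul, derivative_X, one_mul, ih, derivative_mul,
      derivative_C, zero_mul, zero_add]
    push_cast
    rw [h1]
    simp only [map_add, C_1]
    ring

lemma deriv_laplaceP (j : ℕ) :
    derivative (laplaceP j) = C (j : ℝ) * laplaceP (j - 1) := by
  cases j with
  | zero => simp [laplaceP]
  | succ j => rw [deriv_laplaceP_succ]; push_cast; rfl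

/-- The coefficients, with the parity condition built in. -/
noncomputable def laplaceB (k j : ℕ) : ℝ :=
  if j % 2 = k % 2 then (((k + j) / 2).factorial : ℝ) / j.factorial else 0

lemma laplaceB_step (k i : ℕ) : laplaceB (k + 1) i = laplaceB k (i + 1) * ((i : ℝ) + 1) := by
  unfold laplaceB
  by_cases h : i % 2 = (k + 1) % 2
  · rw [if_pos h, if_pos (by omega)]
    have hk : (k + 1 + i) / 2 = (k + (i + 1)) / 2 := by omega
    rw [hk, Nat.factorial_succ]
    have h1 : ((i + 1).factorial : ℝ) ≠ 0 := Nat.cast_ne_zero.mpr (Nat.factorial_ne_zero _)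
    have h2 : (i.factorial : ℝ) ≠ 0 := Nat.cast_ne_zero.mpr (Nat.factorial_ne_zero _)
    push_cast
    field_simp
  · rw [if_neg h, if_neg (by omega), zero_mul]

lemma laplaceB_self (k : ℕ) : laplaceB k k = 1 := by
  unfold laplaceB
  rw [if_pos rfl]
  have : (k + k) / 2 = k := by omega
  rw [this, div_self (Nat.cast_ne_zero.mpr (Nat.factorial_ne_zero _))]

lemma laplaceQ_eq (k : ℕ) :
    laplaceQ k = ∑ j ∈ Finset.range (k + 1), C (laplaceB k j) * laplaceP j := by
  induction k with
  | zero =>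
    simp [laplaceQ, laplaceB, laplaceP]
  | succ k ih =>
    have hQ : laplaceQ (k + 1) = laplaceP (k + 1) + derivative (laplaceQ k) := rfl
    rw [hQ, ih, derivative_sum]
    have hterm : ∀ j : ℕ, derivative (C (laplaceB k j) * laplaceP j)
        = C (laplaceB k j * (j : ℝ)) * laplaceP (j - 1) := by
      intro j
      rw [derivative_mul, derivative_C, zero_mul, zero_add, deriv_laplaceP, map_mul]
      ring
    simp only [hterm]
    rw [Finset.sum_range_succ']
    simp only [Nat.cast_zero, mul_zero, map_zero, zero_mul, add_zero]
    have hre : ∀ i : ℕ, C (laplaceB k (i + 1) * ((i + 1 : ℕ) : ℝ)) * laplaceP (i + 1 - 1)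
        = C (laplaceB (k + 1) i) * laplaceP i := by
      intro i
      rw [laplaceB_step k i]
      push_cast
      rfl
    simp only [hre]
    rw [Finset.sum_range_succ (n := k + 1), Finset.sum_range_succ (n := k)]
    rw [laplaceB_self]
    have hzero : laplaceB (k + 1) k = 0 := by
      unfold laplaceB; rw [if_neg (by omega)]
    rw [hzero]
    simp only [map_zero, zero_mul, add_zero, map_one, one_mul]
    ring

lemma laplace_lindep : ∀ (s : Finset ℕ) (c : ℕ → ℝ),
    (∑ j ∈ s, C (c j) * laplaceP j) = 0 → ∀ j ∈ s, c j = 0 := by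
  intro s
  induction s using Finset.induction_on_max with
  | empty => intro c _ j hj; exact absurd hj (Finset.notMem_empty j)
  | insert a s ha ih =>
    intro c h j hj
    have hnotmem : a ∉ s := fun hm => absurd (ha a hm) (lt_irrefl a)
    rw [Finset.sum_insert hnotmem] at h
    have hca : c a = 0 := by
      have hc := congrArg (fun p => coeff p a) h
      simp only [coeff_add, coeff_zero, finset_sum_coeff, coeff_C_mul,
        laplaceP_coeff_self, mul_one] at hc
      have hrest : ∑ j ∈ s, c j * (laplaceP j).coeff a = 0 :=
        Finset.sum_eq_zero fun j hj => by rw [laplaceP_coeff_of_lt (ha j hj), mul_zero]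
      rw [hrest, add_zero] at hc
      exact hc
    rcases Finset.mem_insert.mp hj with rfl | hjs
    · exact hca
    · apply ih c _ j hjs
      rwa [hca, map_zero, zero_mul, zero_add] at h

/-- `Q_k` has the unique expansion `Q_k = Σ_{j ∈ J(k)} β_{k,j}·P_j` in the basis of Laplace
polynomials `P_j`, with `β_{k,j} = ((k+j)/2)!/j!`. -/
theorem laplaceQ_expansion (k : ℕ) :
    laplaceQ k =
      (∑ j ∈ laplaceJ k, C ((((k + j) / 2).factorial : ℝ) / j.factorial) * laplaceP j) ∧
    ∀ β : ℕ → ℝ,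
      laplaceQ k = (∑ j ∈ laplaceJ k, C (β j) * laplaceP j) →
      ∀ j ∈ laplaceJ k, β j = (((k + j) / 2).factorial : ℝ) / j.factorial := by
  have hfilter : (∑ j ∈ laplaceJ k, C ((((k + j) / 2).factorial : ℝ) / j.factorial) * laplaceP j)
      = ∑ j ∈ Finset.range (k + 1), C (laplaceB k j) * laplaceP j := by
    rw [laplaceJ, Finset.sum_filter]
    refine Finset.sum_congr rfl fun j _ => ?_
    by_cases h : j % 2 = k % 2
    · rw [if_pos h]; unfold laplaceB; rw [if_pos h]
    · rw [if_neg h]; unfold laplaceB; rw [if_neg h, map_zero, zero_mul]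
  have hexp : laplaceQ k
      = ∑ j ∈ laplaceJ k, C ((((k + j) / 2).factorial : ℝ) / j.factorial) * laplaceP j := by
    rw [hfilter, laplaceQ_eq]
  refine ⟨hexp, fun β hβ j hj => ?_⟩
  have hsub : (∑ j ∈ laplaceJ k,
      C (β j - (((k + j) / 2).factorial : ℝ) / j.factorial) * laplaceP j) = 0 := by
    have := hβ.symm.trans hexp
    calc (∑ j ∈ laplaceJ k, C (β j - (((k + j) / 2).factorial : ℝ) / j.factorial) * laplaceP j)
        = (∑ j ∈ laplaceJ k, C (β j) * laplaceP j)
          - ∑ j ∈ laplaceJ k, C ((((k + j) / 2).factorial : ℝ) / j.factorial) * laplaceP j := by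
          rw [← Finset.sum_sub_distrib]
          refine Finset.sum_congr rfl fun j _ => ?_
          rw [map_sub, sub_mul]
      _ = 0 := by rw [this, sub_self]
  have := laplace_lindep (laplaceJ k) _ hsub j hj
  linarith
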